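/- arXiv:1607.04034 — 3 statements merged into one kernel-verified Lean document; each statement's English description precedes it below -/
import Mathlib

section
/- Let λ be an (n,m)-hook partition (λ_{n+1} ≤ m), let δ = 2m − 2n, and define b_j = max(λ_j − j − δ/2 + 1, 0) for 1 ≤ j ≤ n and a_i = max(λ^t_i − i + δ/2, 0) for 1 ≤ i ≤ m, where λ^t is the transpose partition. Then for every s with 0 ≤ s ≤ min(m,n) − 1, if a_{m−s} > 0 then b_{n−s} > 0. -/
/-- Let `λ` be an `(n,m)`-hook partition, `δ = 2m − 2n`,
`b_j = max(λ_j − j − δ/2 + 1, 0)` and `a_i = max(λᵗ_i − i + δ/2, 0)`.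
Then for `0 ≤ s ≤ min(m,n) − 1`, if `a_{m−s} > 0` then `b_{n−s} > 0`. -/
theorem stmt_2 (m n : ℕ) (f ft : ℕ → ℕ)
    (hmono : ∀ i j : ℕ, i ≤ j → f j ≤ f i)
    (hfin : ∃ N : ℕ, ∀ i : ℕ, N ≤ i → f i = 0)
    (hhook : f (n + 1) ≤ m)
    (hft : ∀ i : ℕ, ft i = Set.ncard {k : ℕ | 1 ≤ k ∧ i ≤ f k}) :
    ∀ s : ℕ, s + 1 ≤ min m n →
      0 < max ((ft (m - s) : ℤ) - (m - s) + ((m : ℤ) - n)) 0 →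
      0 < max ((f (n - s) : ℤ) - (n - s) - ((m : ℤ) - n) + 1) 0 := by
  intro s hs ha
  have hm : s + 1 ≤ m := le_trans hs (min_le_left _ _)
  have hn : s + 1 ≤ n := le_trans hs (min_le_right _ _)
  rw [lt_max_iff] at ha
  rcases ha with ha | ha
  swap
  · exact absurd ha (lt_irrefl 0)
  have hft' : n - s + 1 ≤ ft (m - s) := by omega
  have hkey : m - s ≤ f (n - s + 1) := by
    by_contra hlt
    push_neg at hlt
    have hsub : {k : ℕ | 1 ≤ k ∧ m - s ≤ f k} ⊆ Set.Icc 1 (n - s) := by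
      rintro k ⟨hk1, hk2⟩
      refine ⟨hk1, ?_⟩
      by_contra h
      push_neg at h
      have := hmono (n - s + 1) k (by omega)
      omega
    have hcard := Set.ncard_le_ncard hsub (Set.finite_Icc 1 (n - s))
    rw [← Finset.coe_Icc, Set.ncard_coe_finset, Nat.card_Icc] at hcard
    rw [hft (m - s)] at hft'
    omega
  have hf : m - s ≤ f (n - s) := le_trans hkey (hmono (n - s) (n - s + 1) (by omega))
  rw [lt_max_iff]
  left
  omega
end

section
/- Stacking two Brauer diagrams is well-defined: given two perfect matchings D_1, D_2 on {1,…,d} ⊔ {1',…,d'} (bottom and top points), the relation on bottom points of D_1 and top points of D_2 obtained by following paths through the middle points yields again a perfect matching on the 2d external points, and every middle point lies either on such a path or on a closed cycle. -/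
namespace Stmt10Aux

abbrev Pt (d : ℕ) := Fin d ⊕ Fin d ⊕ Fin d

variable {d : ℕ}

def Ext (x : Pt d) : Prop := ∀ i : Fin d, x ≠ Sum.inr (Sum.inl i)

variable (σ₁ σ₂ : Pt d → Pt d)

def stp (p : Pt d × Bool) : Pt d × Bool := (if p.2 then σ₁ p.1 else σ₂ p.1, !p.2)

def rv (p : Pt d × Bool) : Pt d × Bool := (p.1, !p.2)

theorem rel_stp (p : Pt d × Bool) :
    σ₁ p.1 = (stp σ₁ σ₂ p).1 ∨ σ₂ p.1 = (stp σ₁ σ₂ p).1 := by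
  rcases p with ⟨x, (_ | _)⟩ <;> simp [stp]

theorem chain (k : ℕ) (p : Pt d × Bool) :
    Relation.ReflTransGen (fun a b => σ₁ a = b ∨ σ₂ a = b) p.1 ((stp σ₁ σ₂)^[k] p).1 := by
  induction k with
  | zero => exact .refl
  | succ k ih =>
      rw [Function.iterate_succ_apply']
      exact ih.tail (rel_stp σ₁ σ₂ _)

variable (h₁inv : ∀ x, σ₁ (σ₁ x) = x) (h₂inv : ∀ x, σ₂ (σ₂ x) = x)
include h₁inv h₂inv

theorem stp_inj : Function.Injective (stp σ₁ σ₂ : Pt d × Bool → Pt d × Bool) :=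
  Function.LeftInverse.injective
    (g := fun p => (if p.2 then σ₂ p.1 else σ₁ p.1, !p.2))
    (fun p => by rcases p with ⟨x, (_ | _)⟩ <;> simp [stp, h₁inv, h₂inv])

theorem srs (p : Pt d × Bool) : stp σ₁ σ₂ (rv (stp σ₁ σ₂ p)) = rv p := by
  rcases p with ⟨x, (_ | _)⟩ <;> simp [stp, rv, h₁inv, h₂inv]

theorem srs_iter (k : ℕ) (p : Pt d × Bool) :
    (stp σ₁ σ₂)^[k] (rv ((stp σ₁ σ₂)^[k] p)) = rv p := by
  induction k with
  | zero => rfl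
  | succ k ih =>
      rw [Function.iterate_succ_apply' (stp σ₁ σ₂) k p, Function.iterate_succ_apply,
        srs σ₁ σ₂ h₁inv h₂inv]
      exact ih

omit h₁inv h₂inv in
theorem bool_iter (k : ℕ) (p : Pt d × Bool) :
    ((stp σ₁ σ₂)^[k] p).2 = if Even k then p.2 else !p.2 := by
  induction k with
  | zero => simp
  | succ k ih =>
      rw [Function.iterate_succ_apply']
      have h : (stp σ₁ σ₂ ((stp σ₁ σ₂)^[k] p)).2 = !((stp σ₁ σ₂)^[k] p).2 := rfl
      rw [h, ih]
      rcases Nat.even_or_odd k with h' | h'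
      · simp [h', Nat.even_add_one]
      · simp [Nat.not_even_iff_odd.mpr h', Nat.even_add_one, Nat.not_even_iff_odd.mpr h']

theorem periodic (p : Pt d × Bool) : ∃ N, 0 < N ∧ (stp σ₁ σ₂)^[N] p = p := by
  obtain ⟨i, j, hij, h⟩ :=
    Finite.exists_ne_map_eq_of_infinite (fun k : ℕ => (stp σ₁ σ₂)^[k] p)
  rcases hij.lt_or_gt with h' | h'
  · refine ⟨j - i, by omega, ?_⟩
    have : (stp σ₁ σ₂)^[i] ((stp σ₁ σ₂)^[j - i] p) = (stp σ₁ σ₂)^[i] p := by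
      rw [← Function.iterate_add_apply, show i + (j - i) = j by omega]; exact h.symm
    exact ((stp_inj σ₁ σ₂ h₁inv h₂inv).iterate i) this
  · refine ⟨i - j, by omega, ?_⟩
    have : (stp σ₁ σ₂)^[j] ((stp σ₁ σ₂)^[i - j] p) = (stp σ₁ σ₂)^[j] p := by
      rw [← Function.iterate_add_apply, show j + (i - j) = i by omega]; exact h
    exact ((stp_inj σ₁ σ₂ h₁inv h₂inv).iterate j) this

omit h₂inv in
theorem sig1_top {x : Pt d} {t : Fin d}
    (h₁fix : ∀ t : Fin d, σ₁ (Sum.inr (Sum.inr t)) = Sum.inr (Sum.inr t))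
    (h : σ₁ x = Sum.inr (Sum.inr t)) : x = Sum.inr (Sum.inr t) := by
  have h2 := h₁inv x
  rw [h, h₁fix] at h2
  exact h2.symm

omit h₁inv in
theorem sig2_bot {x : Pt d} {b : Fin d}
    (h₂fix : ∀ b : Fin d, σ₂ (Sum.inl b) = Sum.inl b)
    (h : σ₂ x = Sum.inl b) : x = Sum.inl b := by
  have h2 := h₂inv x
  rw [h, h₂fix] at h2
  exact h2.symm

theorem turnaround
    (h₁fix : ∀ t : Fin d, σ₁ (Sum.inr (Sum.inr t)) = Sum.inr (Sum.inr t))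
    (h₂fix : ∀ b : Fin d, σ₂ (Sum.inl b) = Sum.inl b)
    (v : Pt d × Bool)
    (hok1 : v.2 = true → ∀ t : Fin d, v.1 ≠ Sum.inr (Sum.inr t))
    (hok2 : v.2 = false → ∀ b : Fin d, v.1 ≠ Sum.inl b)
    (hext : Ext (stp σ₁ σ₂ v).1) :
    stp σ₁ σ₂ (stp σ₁ σ₂ v) = rv (stp σ₁ σ₂ v) := by
  rcases v with ⟨q, (_ | _)⟩
  · -- bool false : stp v = (σ₂ q, true); need σ₁ (σ₂ q) = σ₂ q
    have hw : ∃ t, σ₂ q = Sum.inr (Sum.inr t) := by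
      rcases hq : σ₂ q with b | i | t
      · exact absurd (sig2_bot σ₂ h₂inv h₂fix hq) (hok2 rfl b)
      · exact absurd hq (by have := hext i; simpa [stp] using this)
      · exact ⟨t, rfl⟩
    obtain ⟨t, ht⟩ := hw
    simp [stp, rv, ht, h₁fix]
  · have hw : ∃ b, σ₁ q = Sum.inl b := by
      rcases hq : σ₁ q with b | i | t
      · exact ⟨b, rfl⟩
      · exact absurd hq (by have := hext i; simpa [stp] using this)
      · exact absurd (sig1_top σ₁ h₁inv h₁fix hq) (hok1 rfl t)
    obtain ⟨b, hb⟩ := hw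
    simp [stp, rv, hb, h₂fix]

end Stmt10Aux




open Stmt10Aux in
/-- Stacking two Brauer diagrams is well-defined.  Model the `d` bottom points,
`d` middle points and `d` top points as `Fin d ⊕ Fin d ⊕ Fin d`, and the two
perfect matchings `D₁` (on bottom ⊔ middle) and `D₂` (on middle ⊔ top) as
involutions `σ₁, σ₂` fixing exactly the top resp. bottom points.  Following
alternating paths, every external (non-middle) point is joined to a unique
other external point — so the composite is again a perfect matching on the
`2d` external points — and every middle point either lies on a path to an
external point or on a closed cycle among the middle points. -/
theorem stmt_10 (d : ℕ)
    (σ₁ σ₂ : (Fin d ⊕ Fin d ⊕ Fin d) → (Fin d ⊕ Fin d ⊕ Fin d))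
    (h₁inv : ∀ x, σ₁ (σ₁ x) = x)
    (h₂inv : ∀ x, σ₂ (σ₂ x) = x)
    (h₁fix : ∀ t : Fin d, σ₁ (Sum.inr (Sum.inr t)) = Sum.inr (Sum.inr t))
    (h₂fix : ∀ b : Fin d, σ₂ (Sum.inl b) = Sum.inl b)
    (h₁move : ∀ x, (∀ t : Fin d, x ≠ Sum.inr (Sum.inr t)) → σ₁ x ≠ x)
    (h₂move : ∀ x, (∀ b : Fin d, x ≠ Sum.inl b) → σ₂ x ≠ x) :
    (∀ x : Fin d ⊕ Fin d ⊕ Fin d, (∀ i : Fin d, x ≠ Sum.inr (Sum.inl i)) →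
        ∃! y, (∀ i : Fin d, y ≠ Sum.inr (Sum.inl i)) ∧ y ≠ x ∧
          Relation.ReflTransGen (fun a b => σ₁ a = b ∨ σ₂ a = b) x y)
    ∧ (∀ z : Fin d ⊕ Fin d ⊕ Fin d, (∃ i : Fin d, z = Sum.inr (Sum.inl i)) →
        (∃ x, (∀ i : Fin d, x ≠ Sum.inr (Sum.inl i)) ∧
            Relation.ReflTransGen (fun a b => σ₁ a = b ∨ σ₂ a = b) z x)
        ∨ ∃ k : ℕ, 0 < k ∧ (σ₂ ∘ σ₁)^[k] z = z ∧
            ∀ j ≤ k, ∃ i : Fin d, (σ₂ ∘ σ₁)^[j] z = Sum.inr (Sum.inl i)) := by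
  classical
  constructor
  · intro x hx
    obtain ⟨b₀, hA, hB, hC1, hC2⟩ :
        ∃ b₀ : Bool, stp σ₁ σ₂ (x, !b₀) = (x, b₀)
          ∧ (if b₀ then σ₁ x else σ₂ x) ≠ x
          ∧ (b₀ = true → ∀ t : Fin d, x ≠ Sum.inr (Sum.inr t))
          ∧ (b₀ = false → ∀ b : Fin d, x ≠ Sum.inl b) := by
      rcases x with b | i | t
      · exact ⟨true, by simp [stp, h₂fix], by simpa using h₁move _ (by simp), by simp, by simp⟩
      · exact absurd rfl (hx i)
      · exact ⟨false, by simp [stp, h₁fix], by simpa using h₂move _ (by simp), by simp, by simp⟩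
    have hex : ∃ k, 0 < k ∧ Ext ((stp σ₁ σ₂)^[k] (x, b₀)).1 := by
      obtain ⟨N, hN, hNp⟩ := periodic σ₁ σ₂ h₁inv h₂inv (x, b₀)
      exact ⟨N, hN, by rw [hNp]; exact hx⟩
    set n := Nat.find hex with hn
    obtain ⟨hnpos, hyext⟩ := Nat.find_spec hex
    have hmid : ∀ k, 0 < k → k < n →
        ∃ i, ((stp σ₁ σ₂)^[k] (x, b₀)).1 = Sum.inr (Sum.inl i) := by
      intro k hk hkn
      have h2 := Nat.find_min hex hkn
      push_neg at h2
      have h3 := h2 hk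
      simp only [Stmt10Aux.Ext, ne_eq, not_forall, not_not] at h3
      exact h3
    have hturn : (stp σ₁ σ₂)^[n+1] (x, b₀) = rv ((stp σ₁ σ₂)^[n] (x, b₀)) := by
      obtain ⟨m, hm⟩ : ∃ m, n = m + 1 := ⟨n - 1, by omega⟩
      have hok1 : ((stp σ₁ σ₂)^[m] (x, b₀)).2 = true →
          ∀ t : Fin d, ((stp σ₁ σ₂)^[m] (x, b₀)).1 ≠ Sum.inr (Sum.inr t) := by
        rcases Nat.eq_zero_or_pos m with rfl | hm0
        · simpa using hC1
        · obtain ⟨i, hi⟩ := hmid m hm0 (by omega)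
          intro _ t
          rw [hi]; simp
      have hok2 : ((stp σ₁ σ₂)^[m] (x, b₀)).2 = false →
          ∀ b : Fin d, ((stp σ₁ σ₂)^[m] (x, b₀)).1 ≠ Sum.inl b := by
        rcases Nat.eq_zero_or_pos m with rfl | hm0
        · simpa using hC2
        · obtain ⟨i, hi⟩ := hmid m hm0 (by omega)
          intro _ b
          rw [hi]; simp
      have hext : Ext ((stp σ₁ σ₂) ((stp σ₁ σ₂)^[m] (x, b₀))).1 := by
        rw [← Function.iterate_succ_apply' (stp σ₁ σ₂) m (x, b₀), Nat.succ_eq_add_one, ← hm]; exact hyext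
      have := turnaround σ₁ σ₂ h₁inv h₂inv h₁fix h₂fix _ hok1 hok2 hext
      rw [hm]
      rw [Function.iterate_succ_apply', Function.iterate_succ_apply' (stp σ₁ σ₂) m]
      exact this
    have pal : ∀ j, j ≤ n →
        (stp σ₁ σ₂)^[n+1+j] (x, b₀) = rv ((stp σ₁ σ₂)^[n-j] (x, b₀)) := by
      intro j
      induction j with
      | zero => intro _; simpa using hturn
      | succ j ih =>
        intro hj
        have step1 : (stp σ₁ σ₂)^[n+1+(j+1)] (x, b₀)
            = stp σ₁ σ₂ ((stp σ₁ σ₂)^[n+1+j] (x, b₀)) := by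
          rw [show n+1+(j+1) = (n+1+j)+1 by omega, Function.iterate_succ_apply']
        rw [step1, ih (by omega)]
        obtain ⟨m, hm⟩ : ∃ m, n - j = m + 1 := ⟨n - (j+1), by omega⟩
        rw [hm, Function.iterate_succ_apply', srs σ₁ σ₂ h₁inv h₂inv,
          show n - (j+1) = m by omega]
    have hT : (stp σ₁ σ₂)^[2*n+2] (x, b₀) = (x, b₀) := by
      have h1 : (stp σ₁ σ₂)^[n+1] (x, b₀) = rv ((stp σ₁ σ₂)^[n] (x, b₀)) := by
        simpa using pal 0 (by omega)
      calc (stp σ₁ σ₂)^[2*n+2] (x, b₀)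
          = (stp σ₁ σ₂)^[n+1] ((stp σ₁ σ₂)^[n+1] (x, b₀)) := by
            rw [← Function.iterate_add_apply]; congr 1; omega
        _ = (stp σ₁ σ₂)^[n+1] (rv ((stp σ₁ σ₂)^[n] (x, b₀))) := by rw [h1]
        _ = stp σ₁ σ₂ ((stp σ₁ σ₂)^[n] (rv ((stp σ₁ σ₂)^[n] (x, b₀)))) := by
            rw [Function.iterate_succ_apply']
        _ = stp σ₁ σ₂ (rv (x, b₀)) := by rw [srs_iter σ₁ σ₂ h₁inv h₂inv]
        _ = (x, b₀) := hA
    have hmod : ∀ k, (stp σ₁ σ₂)^[k] (x, b₀) = (stp σ₁ σ₂)^[k % (2*n+2)] (x, b₀) := by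
      intro k
      conv_lhs => rw [← Nat.div_add_mod k (2*n+2)]
      generalize k / (2*n+2) = a
      induction a with
      | zero => simp
      | succ a ih =>
        rw [show (2*n+2) * (a+1) + k % (2*n+2) = ((2*n+2) * a + k % (2*n+2)) + (2*n+2) by ring,
          Function.iterate_add_apply, hT]
        exact ih
    have hcoords0 : ∀ k, k ≤ n → Ext ((stp σ₁ σ₂)^[k] (x, b₀)).1 →
        ((stp σ₁ σ₂)^[k] (x, b₀)).1 = x ∨
        ((stp σ₁ σ₂)^[k] (x, b₀)).1 = ((stp σ₁ σ₂)^[n] (x, b₀)).1 := by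
      intro k hk hkext
      rcases Nat.eq_zero_or_pos k with rfl | hk0
      · left; rfl
      rcases eq_or_lt_of_le hk with rfl | hkn
      · right; rfl
      · obtain ⟨i, hi⟩ := hmid k hk0 hkn
        exact absurd hi (hkext i)
    have hcoords : ∀ k, k ≤ 2*n+1 → Ext ((stp σ₁ σ₂)^[k] (x, b₀)).1 →
        ((stp σ₁ σ₂)^[k] (x, b₀)).1 = x ∨
        ((stp σ₁ σ₂)^[k] (x, b₀)).1 = ((stp σ₁ σ₂)^[n] (x, b₀)).1 := by
      intro k hk hkext
      rcases le_or_gt k n with h | h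
      · exact hcoords0 k h hkext
      · obtain ⟨j, hj, rfl⟩ : ∃ j, j ≤ n ∧ k = n+1+j := ⟨k - n - 1, by omega, by omega⟩
        rw [pal j hj] at hkext ⊢
        exact hcoords0 _ (by omega) hkext
    have hyx : ((stp σ₁ σ₂)^[n] (x, b₀)).1 ≠ x := by
      intro hxy
      have hbn := bool_iter σ₁ σ₂ n (x, b₀)
      by_cases hev : Even n
      · have hst : (stp σ₁ σ₂)^[n] (x, b₀) = (x, b₀) := by
          have h2 : ((stp σ₁ σ₂)^[n] (x, b₀)).2 = b₀ := by rw [hbn]; simp [hev]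
          exact Prod.ext hxy h2
        obtain ⟨m, hm⟩ : ∃ m, n = m + 1 := ⟨n - 1, by omega⟩
        have h1 : stp σ₁ σ₂ (rv (x, b₀)) = (x, b₀) := hA
        have h2 : stp σ₁ σ₂ ((stp σ₁ σ₂)^[m] (x, b₀)) = (x, b₀) := by
          rw [← Function.iterate_succ_apply' (stp σ₁ σ₂) m (x, b₀), Nat.succ_eq_add_one, ← hm]; exact hst
        have h3 : rv (x, b₀) = (stp σ₁ σ₂)^[m] (x, b₀) :=
          stp_inj σ₁ σ₂ h₁inv h₂inv (h1.trans h2.symm)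
        rcases Nat.eq_zero_or_pos m with rfl | hm0
        · have := congrArg Prod.snd h3
          simp [rv] at this
        · obtain ⟨i, hi⟩ := hmid m hm0 (by omega)
          have h4 := congrArg Prod.fst h3
          rw [hi] at h4
          simp only [rv] at h4
          exact hx i h4
      · obtain ⟨m, hm⟩ : ∃ m, n = 2*m+1 := by
          obtain ⟨m, hm⟩ := Nat.not_even_iff_odd.mp hev
          exact ⟨m, by omega⟩
        have hst : (stp σ₁ σ₂)^[n] (x, b₀) = rv (x, b₀) := by
          have h2 : ((stp σ₁ σ₂)^[n] (x, b₀)).2 = !b₀ := by rw [hbn]; simp [hev]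
          exact Prod.ext hxy h2
        have h4 : (stp σ₁ σ₂)^[m] (rv ((stp σ₁ σ₂)^[m] (x, b₀))) = rv (x, b₀) :=
          srs_iter σ₁ σ₂ h₁inv h₂inv m (x, b₀)
        have h5 : (stp σ₁ σ₂)^[m] ((stp σ₁ σ₂)^[m+1] (x, b₀)) = rv (x, b₀) := by
          rw [← Function.iterate_add_apply, show m + (m+1) = n by omega]; exact hst
        have h6 : rv ((stp σ₁ σ₂)^[m] (x, b₀)) = (stp σ₁ σ₂)^[m+1] (x, b₀) :=
          ((stp_inj σ₁ σ₂ h₁inv h₂inv).iterate m) (h4.trans h5.symm)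
        have h7 : (stp σ₁ σ₂ ((stp σ₁ σ₂)^[m] (x, b₀))).1 = ((stp σ₁ σ₂)^[m] (x, b₀)).1 := by
          rw [← Function.iterate_succ_apply' (stp σ₁ σ₂) m (x, b₀), ← h6]; rfl
        rcases Nat.eq_zero_or_pos m with rfl | hm0
        · exact hB (by simp [stp] at h7; exact h7)
        · obtain ⟨i, hi⟩ := hmid m hm0 (by omega)
          have h8 : (if ((stp σ₁ σ₂)^[m] (x, b₀)).2 then σ₁ ((stp σ₁ σ₂)^[m] (x, b₀)).1
              else σ₂ ((stp σ₁ σ₂)^[m] (x, b₀)).1) = ((stp σ₁ σ₂)^[m] (x, b₀)).1 := h7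
          rw [hi] at h8
          cases hb : ((stp σ₁ σ₂)^[m] (x, b₀)).2 <;> rw [hb] at h8
          · exact h₂move (Sum.inr (Sum.inl i)) (by simp) (by simpa using h8)
          · exact h₁move (Sum.inr (Sum.inl i)) (by simp) (by simpa using h8)
    refine ⟨((stp σ₁ σ₂)^[n] (x, b₀)).1, ⟨hyext, hyx, chain σ₁ σ₂ n (x, b₀)⟩, ?_⟩
    rintro y' ⟨hy'ext, hy'x, hy'E⟩
    have hclosed : ∀ p q, (∃ k, ((stp σ₁ σ₂)^[k] (x, b₀)).1 = p) → (σ₁ p = q ∨ σ₂ p = q) →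
        ∃ k, ((stp σ₁ σ₂)^[k] (x, b₀)).1 = q := by
      rintro p q ⟨k, hk⟩ hpq
      have hkT : ((stp σ₁ σ₂)^[k % (2*n+2)] (x, b₀)).1 = p := by rw [← hmod]; exact hk
      set k' := k % (2*n+2) with hk'
      have hk'T : k' < 2*n+2 := Nat.mod_lt _ (by omega)
      have h8 : (stp σ₁ σ₂)^[k'+1] (rv ((stp σ₁ σ₂)^[k'] (x, b₀))) = (x, b₀) := by
        rw [Function.iterate_succ_apply', srs_iter σ₁ σ₂ h₁inv h₂inv]
        exact hA
      have h9 : (stp σ₁ σ₂)^[k'+1] ((stp σ₁ σ₂)^[2*n+2 - (k'+1)] (x, b₀)) = (x, b₀) := by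
        rw [← Function.iterate_add_apply, show k'+1 + (2*n+2 - (k'+1)) = 2*n+2 by omega]
        exact hT
      have h10 : rv ((stp σ₁ σ₂)^[k'] (x, b₀)) = (stp σ₁ σ₂)^[2*n+2-(k'+1)] (x, b₀) :=
        ((stp_inj σ₁ σ₂ h₁inv h₂inv).iterate (k'+1)) (h8.trans h9.symm)
      have hs1 : ((stp σ₁ σ₂)^[k'+1] (x, b₀)).1
          = (if ((stp σ₁ σ₂)^[k'] (x, b₀)).2 then σ₁ p else σ₂ p) := by
        rw [Function.iterate_succ_apply']
        simp [stp, hkT]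
      have hs2 : ((stp σ₁ σ₂)^[2*n+2 - k'] (x, b₀)).1
          = (if !((stp σ₁ σ₂)^[k'] (x, b₀)).2 then σ₁ p else σ₂ p) := by
        rw [show 2*n+2 - k' = (2*n+2 - (k'+1)) + 1 by omega, Function.iterate_succ_apply',
          ← h10]
        simp [stp, rv, hkT]
      cases hb : ((stp σ₁ σ₂)^[k'] (x, b₀)).2 <;> rcases hpq with h | h
      · exact ⟨2*n+2 - k', by rw [hs2, hb]; simpa using h⟩
      · exact ⟨k'+1, by rw [hs1, hb]; simpa using h⟩
      · exact ⟨k'+1, by rw [hs1, hb]; simpa using h⟩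
      · exact ⟨2*n+2 - k', by rw [hs2, hb]; simpa using h⟩
    have hreach : ∀ q, Relation.ReflTransGen (fun a b => σ₁ a = b ∨ σ₂ a = b) x q →
        ∃ k, ((stp σ₁ σ₂)^[k] (x, b₀)).1 = q := by
      intro q hq
      induction hq with
      | refl => exact ⟨0, rfl⟩
      | tail _ hbc ih => exact hclosed _ _ ih hbc
    obtain ⟨k, hk⟩ := hreach y' hy'E
    have hk2 : ((stp σ₁ σ₂)^[k % (2*n+2)] (x, b₀)).1 = y' := by rw [← hmod]; exact hk
    have hkle : k % (2*n+2) ≤ 2*n+1 := by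
      have := Nat.mod_lt k (show 0 < 2*n+2 by omega); omega
    have := hcoords (k % (2*n+2)) hkle (by rw [hk2]; exact hy'ext)
    rw [hk2] at this
    rcases this with h | h
    · exact absurd h hy'x
    · exact h
  · intro z hz
    obtain ⟨i, rfl⟩ := hz
    by_cases h : ∃ k, Ext ((stp σ₁ σ₂)^[k] (Sum.inr (Sum.inl i), true)).1
    · obtain ⟨k, hk⟩ := h
      exact Or.inl ⟨_, hk, chain σ₁ σ₂ k (Sum.inr (Sum.inl i), true)⟩
    · push_neg at h
      obtain ⟨N, hN, hNp⟩ := periodic σ₁ σ₂ h₁inv h₂inv (Sum.inr (Sum.inl i), true)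
      have hev : Even N := by
        have hb := bool_iter σ₁ σ₂ N (Sum.inr (Sum.inl i), true)
        rw [hNp] at hb
        by_contra hodd
        simp [hodd] at hb
      have htwo : ∀ j, (stp σ₁ σ₂)^[2*j] (Sum.inr (Sum.inl i), true)
          = ((σ₂ ∘ σ₁)^[j] (Sum.inr (Sum.inl i)), true) := by
        intro j
        induction j with
        | zero => simp
        | succ j ih =>
          rw [show 2*(j+1) = (2*j) + 1 + 1 by omega, Function.iterate_succ_apply',
            Function.iterate_succ_apply', ih, Function.iterate_succ_apply']
          simp [stp]
      obtain ⟨m, hm⟩ := hev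
      right
      refine ⟨m, by omega, ?_, ?_⟩
      · have h2 := htwo m
        rw [show 2*m = N by omega, hNp] at h2
        exact (congrArg Prod.fst h2).symm
      · intro j hj
        have hj' := h (2*j)
        rw [htwo j] at hj'
        simp only [Stmt10Aux.Ext, ne_eq, not_forall, not_not] at hj'
        exact hj'
end

section
/- In the zigzag algebra of type D_∞ defined by the quiver and relations above (vertices 0,1,2,3,…; f_0:0→2, f_1:1→2, f_i:i→i+1 and g's reversed; relations f_{i+1}f_i = 0 = g_i g_{i+1}, g_{i+1}f_{i+1} = f_i g_i, g_0 f_1 = 0 = g_1 f_0, f_0 g_0 = g_1 f_1 = g_2 f_2, f_2 f_0 = 0 = g_0 g_2), for any two distinct vertices i ≠ j the space e_j A e_i is 1-dimensional if i and j are adjacent in the quiver (connected by an arrow) and 0-dimensional otherwise. -/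
/-- Generators of the path algebra of the `D_∞` zigzag quiver: vertex
idempotents `e i`, arrows `f 0 : 0 → 2`, `f 1 : 1 → 2`, `f i : i → i+1`
(`i ≥ 2`), and reversed arrows `g i`. -/
inductive ZGen : Type
  | e (i : ℕ)
  | f (i : ℕ)
  | g (i : ℕ)

/-- The generator `x` as an element of the free algebra. -/
noncomputable def ZX (x : ZGen) : FreeAlgebra ℂ ZGen := FreeAlgebra.ι ℂ x

/-- Target vertex of the arrow `f i` (and source of `g i`). -/
def tgtF (i : ℕ) : ℕ := if i ≤ 1 then 2 else i + 1

/-- Relations defining the path algebra of the quiver modulo the relations of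
Theorem: `e` are orthogonal idempotents, `f i = e_{tgt} f i e_{src}` and
`g i = e_{src} g i e_{tgt}`, together with
`f_{i+1}∘f_i = 0 = g_i∘g_{i+1}`, `g_{i+1}∘f_{i+1} = f_i∘g_i` (for `i ≥ 0`),
`g_0∘f_1 = 0 = g_1∘f_0`, `f_0∘g_0 = g_1∘f_1 = g_2∘f_2`, and
`f_2∘f_0 = 0 = g_0∘g_2`.  Composition is written right-to-left. -/
inductive ZRel : FreeAlgebra ℂ ZGen → FreeAlgebra ℂ ZGen → Prop
  | e_orth (i j : ℕ) (h : i ≠ j) : ZRel (ZX (.e i) * ZX (.e j)) 0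
  | e_idem (i : ℕ) : ZRel (ZX (.e i) * ZX (.e i)) (ZX (.e i))
  | f_norm (i : ℕ) : ZRel (ZX (.e (tgtF i)) * ZX (.f i) * ZX (.e i)) (ZX (.f i))
  | g_norm (i : ℕ) : ZRel (ZX (.e i) * ZX (.g i) * ZX (.e (tgtF i))) (ZX (.g i))
  | ff (i : ℕ) : ZRel (ZX (.f (i + 1)) * ZX (.f i)) 0
  | gg (i : ℕ) : ZRel (ZX (.g i) * ZX (.g (i + 1))) 0
  | gf_fg (i : ℕ) : ZRel (ZX (.g (i + 1)) * ZX (.f (i + 1))) (ZX (.f i) * ZX (.g i))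
  | g0f1 : ZRel (ZX (.g 0) * ZX (.f 1)) 0
  | g1f0 : ZRel (ZX (.g 1) * ZX (.f 0)) 0
  | loop1 : ZRel (ZX (.f 0) * ZX (.g 0)) (ZX (.g 1) * ZX (.f 1))
  | loop2 : ZRel (ZX (.g 1) * ZX (.f 1)) (ZX (.g 2) * ZX (.f 2))
  | f2f0 : ZRel (ZX (.f 2) * ZX (.f 0)) 0
  | g0g2 : ZRel (ZX (.g 0) * ZX (.g 2)) 0

/-- The zigzag algebra of type `D_∞`. -/
abbrev ZA : Type := RingQuot ZRel

noncomputable def ZE (i : ℕ) : ZA := RingQuot.mkAlgHom ℂ ZRel (ZX (.e i))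
noncomputable def ZF (i : ℕ) : ZA := RingQuot.mkAlgHom ℂ ZRel (ZX (.f i))
noncomputable def ZG (i : ℕ) : ZA := RingQuot.mkAlgHom ℂ ZRel (ZX (.g i))

/-- The loop `c_i = g_i f_i` at the vertex `i`. -/
noncomputable def ZC (i : ℕ) : ZA := ZG i * ZF i

/-! ### Auxiliary lemmas -/

section Aux

open Submodule Matrix

lemma zrel {x y : FreeAlgebra ℂ ZGen} (h : ZRel x y) :
    RingQuot.mkAlgHom ℂ ZRel x = RingQuot.mkAlgHom ℂ ZRel y :=
  RingQuot.mkAlgHom_rel ℂ h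

lemma tgtF_ne (a : ℕ) : tgtF a ≠ a := by unfold tgtF; split <;> omega

lemma tgtF_excl (i j : ℕ) : ¬(tgtF i = j ∧ tgtF j = i) := by
  unfold tgtF; split <;> split <;> omega

lemma ZE_orth {a b : ℕ} (h : a ≠ b) : ZE a * ZE b = 0 := by
  rw [ZE, ZE, ← _root_.map_mul, zrel (ZRel.e_orth a b h), map_zero]

lemma ZE_idem (a : ℕ) : ZE a * ZE a = ZE a := by
  rw [ZE, ← _root_.map_mul, zrel (ZRel.e_idem a)]

lemma ZF_norm (a : ℕ) : ZE (tgtF a) * ZF a * ZE a = ZF a := by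
  rw [ZE, ZE, ZF, ← _root_.map_mul, ← _root_.map_mul, zrel (ZRel.f_norm a)]

lemma ZG_norm (a : ℕ) : ZE a * ZG a * ZE (tgtF a) = ZG a := by
  rw [ZE, ZE, ZG, ← _root_.map_mul, ← _root_.map_mul, zrel (ZRel.g_norm a)]

lemma Zff (a : ℕ) : ZF (a + 1) * ZF a = 0 := by
  rw [ZF, ZF, ← _root_.map_mul, zrel (ZRel.ff a), map_zero]

lemma Zgg (a : ℕ) : ZG a * ZG (a + 1) = 0 := by
  rw [ZG, ZG, ← _root_.map_mul, zrel (ZRel.gg a), map_zero]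

lemma Zgf_fg (a : ℕ) : ZG (a + 1) * ZF (a + 1) = ZF a * ZG a := by
  rw [ZG, ZF, ZG, ZF, ← _root_.map_mul, ← _root_.map_mul, zrel (ZRel.gf_fg a)]

lemma Zg0f1 : ZG 0 * ZF 1 = 0 := by
  rw [ZG, ZF, ← _root_.map_mul, zrel ZRel.g0f1, map_zero]

lemma Zg1f0 : ZG 1 * ZF 0 = 0 := by
  rw [ZG, ZF, ← _root_.map_mul, zrel ZRel.g1f0, map_zero]

lemma Zf2f0 : ZF 2 * ZF 0 = 0 := by
  rw [ZF, ZF, ← _root_.map_mul, zrel ZRel.f2f0, map_zero]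

lemma Zg0g2 : ZG 0 * ZG 2 = 0 := by
  rw [ZG, ZG, ← _root_.map_mul, zrel ZRel.g0g2, map_zero]

lemma ZF_src (a : ℕ) : ZF a * ZE a = ZF a := by
  conv_lhs => rw [← ZF_norm a]
  rw [mul_assoc, ZE_idem, ZF_norm]

lemma ZF_tgt (a : ℕ) : ZE (tgtF a) * ZF a = ZF a := by
  conv_lhs => rw [← ZF_norm a]
  rw [← mul_assoc, ← mul_assoc, ZE_idem, ZF_norm]

lemma ZG_src (a : ℕ) : ZG a * ZE (tgtF a) = ZG a := by
  conv_lhs => rw [← ZG_norm a]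
  rw [mul_assoc, ZE_idem, ZG_norm]

lemma ZG_tgt (a : ℕ) : ZE a * ZG a = ZG a := by
  conv_lhs => rw [← ZG_norm a]
  rw [← mul_assoc, ← mul_assoc, ZE_idem, ZG_norm]

/-- Sandwich lemma: non-matching idempotents kill a product. -/
lemma sand {x y : ZA} {a b : ℕ} (hx : x * ZE a = x) (hy : ZE b * y = y)
    (h : a ≠ b) : x * y = 0 := by
  rw [← hx, ← hy, mul_assoc, ← mul_assoc (ZE a), ZE_orth h, zero_mul, mul_zero]

lemma eF_ne {k a : ℕ} (h : k ≠ tgtF a) : ZE k * ZF a = 0 :=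
  sand (ZE_idem k) (ZF_tgt a) h

lemma Fe_ne {a k : ℕ} (h : a ≠ k) : ZF a * ZE k = 0 :=
  sand (ZF_src a) (ZE_idem k) h

lemma eG_ne {k a : ℕ} (h : k ≠ a) : ZE k * ZG a = 0 :=
  sand (ZE_idem k) (ZG_tgt a) h

lemma Ge_ne {a k : ℕ} (h : tgtF a ≠ k) : ZG a * ZE k = 0 :=
  sand (ZG_src a) (ZE_idem k) h

lemma ZFF (a b : ℕ) : ZF a * ZF b = 0 := by
  by_cases h : a = tgtF b
  · subst h
    match b with
    | 0 => exact Zf2f0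
    | 1 => exact Zff 1
    | (n + 2) =>
      have ht : tgtF (n + 2) = n + 3 := by unfold tgtF; split <;> omega
      rw [ht]; exact Zff (n + 2)
  · exact sand (ZF_src a) (ZF_tgt b) h

lemma ZGG (a b : ℕ) : ZG a * ZG b = 0 := by
  by_cases h : tgtF a = b
  · subst h
    match a with
    | 0 => exact Zg0g2
    | 1 => exact Zgg 1
    | (n + 2) =>
      have ht : tgtF (n + 2) = n + 3 := by unfold tgtF; split <;> omega
      rw [ht]; exact Zgg (n + 2)
  · exact sand (ZG_src a) (ZG_tgt b) h

lemma ZGF_ne {a b : ℕ} (h : a ≠ b) : ZG a * ZF b = 0 := by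
  by_cases ht : tgtF a = tgtF b
  · have hc : (a = 0 ∧ b = 1) ∨ (a = 1 ∧ b = 0) := by
      unfold tgtF at ht; split at ht <;> split at ht <;> omega
    rcases hc with ⟨rfl, rfl⟩ | ⟨rfl, rfl⟩
    · exact Zg0f1
    · exact Zg1f0
  · exact sand (ZG_src a) (ZF_tgt b) ht

lemma ZGF_eq (a : ℕ) : ZG a * ZF a = ZC a := rfl

lemma ZFG_ne {a b : ℕ} (h : a ≠ b) : ZF a * ZG b = 0 :=
  sand (ZF_src a) (ZG_tgt b) h

lemma ZFG_eq (a : ℕ) : ZF a * ZG a = ZC (a + 1) := (Zgf_fg a).symm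

lemma ZCF (b a : ℕ) : ZC b * ZF a = 0 := by
  rw [ZC, mul_assoc, ZFF, mul_zero]

lemma ZGC (a b : ℕ) : ZG a * ZC b = 0 := by
  rw [ZC, ← mul_assoc, ZGG, zero_mul]

lemma ZFC (a b : ℕ) : ZF a * ZC b = 0 := by
  rw [ZC, ← mul_assoc]
  by_cases h : a = b
  · subst h; rw [ZFG_eq, ZCF]
  · rw [ZFG_ne h, zero_mul]

lemma ZCG (b a : ℕ) : ZC b * ZG a = 0 := by
  rw [ZC, mul_assoc]
  by_cases h : b = a
  · subst h; rw [ZFG_eq, ZGC]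
  · rw [ZFG_ne h, mul_zero]

lemma ZCC (a b : ℕ) : ZC a * ZC b = 0 := by
  rw [show ZC b = ZG b * ZF b from rfl, ← mul_assoc, ZCG, zero_mul]

lemma ZEC_ne {k b : ℕ} (h : k ≠ b) : ZE k * ZC b = 0 := by
  rw [ZC, ← mul_assoc, eG_ne h, zero_mul]

lemma ZEC_eq (b : ℕ) : ZE b * ZC b = ZC b := by
  rw [ZC, ← mul_assoc, ZG_tgt]

lemma ZCE_ne {b k : ℕ} (h : b ≠ k) : ZC b * ZE k = 0 := by
  rw [ZC, mul_assoc, Fe_ne h, mul_zero]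

lemma ZCE_eq (b : ℕ) : ZC b * ZE b = ZC b := by
  rw [ZC, mul_assoc, ZF_src]

/-- A spanning set for `ZA`. -/
def SGen : Set ZA :=
  Set.range ZE ∪ Set.range ZF ∪ Set.range ZG ∪ Set.range ZC ∪ {1}

/-- The span of the spanning set. -/
def VV : Submodule ℂ ZA := Submodule.span ℂ SGen

lemma memE (a : ℕ) : ZE a ∈ VV :=
  Submodule.subset_span (Or.inl (Or.inl (Or.inl (Or.inl ⟨a, rfl⟩))))

lemma memF (a : ℕ) : ZF a ∈ VV :=
  Submodule.subset_span (Or.inl (Or.inl (Or.inl (Or.inr ⟨a, rfl⟩))))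

lemma memG (a : ℕ) : ZG a ∈ VV :=
  Submodule.subset_span (Or.inl (Or.inl (Or.inr ⟨a, rfl⟩)))

lemma memC (a : ℕ) : ZC a ∈ VV :=
  Submodule.subset_span (Or.inl (Or.inr ⟨a, rfl⟩))

lemma mem1 : (1 : ZA) ∈ VV := Submodule.subset_span (Or.inr rfl)

lemma mul_mem_SGen : ∀ x ∈ SGen, ∀ y ∈ SGen, x * y ∈ VV := by
  rintro x ((((⟨a, rfl⟩ | ⟨a, rfl⟩) | ⟨a, rfl⟩) | ⟨a, rfl⟩) | rfl) y
      ((((⟨b, rfl⟩ | ⟨b, rfl⟩) | ⟨b, rfl⟩) | ⟨b, rfl⟩) | rfl)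
  -- E * _
  · by_cases h : a = b
    · subst h; rw [ZE_idem]; exact memE a
    · rw [ZE_orth h]; exact zero_mem _
  · by_cases h : a = tgtF b
    · subst h; rw [ZF_tgt]; exact memF b
    · rw [eF_ne h]; exact zero_mem _
  · by_cases h : a = b
    · subst h; rw [ZG_tgt]; exact memG a
    · rw [eG_ne h]; exact zero_mem _
  · by_cases h : a = b
    · subst h; rw [ZEC_eq]; exact memC a
    · rw [ZEC_ne h]; exact zero_mem _
  · rw [mul_one]; exact memE a
  -- F * _
  · by_cases h : a = b
    · subst h; rw [ZF_src]; exact memF a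
    · rw [Fe_ne h]; exact zero_mem _
  · rw [ZFF]; exact zero_mem _
  · by_cases h : a = b
    · subst h; rw [ZFG_eq]; exact memC (a + 1)
    · rw [ZFG_ne h]; exact zero_mem _
  · rw [ZFC]; exact zero_mem _
  · rw [mul_one]; exact memF a
  -- G * _
  · by_cases h : tgtF a = b
    · subst h; rw [ZG_src]; exact memG a
    · rw [Ge_ne h]; exact zero_mem _
  · by_cases h : a = b
    · subst h; rw [ZGF_eq]; exact memC a
    · rw [ZGF_ne h]; exact zero_mem _
  · rw [ZGG]; exact zero_mem _
  · rw [ZGC]; exact zero_mem _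
  · rw [mul_one]; exact memG a
  -- C * _
  · by_cases h : a = b
    · subst h; rw [ZCE_eq]; exact memC a
    · rw [ZCE_ne h]; exact zero_mem _
  · rw [ZCF]; exact zero_mem _
  · rw [ZCG]; exact zero_mem _
  · rw [ZCC]; exact zero_mem _
  · rw [mul_one]; exact memC a
  -- 1 * _
  · rw [one_mul]; exact memE b
  · rw [one_mul]; exact memF b
  · rw [one_mul]; exact memG b
  · rw [one_mul]; exact memC b
  · rw [one_mul]; exact mem1

lemma VV_mul : ∀ x ∈ VV, ∀ y ∈ VV, x * y ∈ VV := by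
  have h : VV * VV ≤ VV := by
    rw [VV, Submodule.span_mul_span]
    exact Submodule.span_le.2 (Set.mul_subset_iff.2 mul_mem_SGen)
  intro x hx y hy
  exact h (Submodule.mul_mem_mul hx hy)

/-- The span as a subalgebra. -/
def VVsub : Subalgebra ℂ ZA where
  carrier := VV
  mul_mem' := fun hx hy => VV_mul _ hx _ hy
  add_mem' := fun hx hy => VV.add_mem hx hy
  one_mem' := mem1
  zero_mem' := VV.zero_mem
  algebraMap_mem' := fun c => by
    rw [Algebra.algebraMap_eq_smul_one]
    exact VV.smul_mem c mem1

lemma mem_VV (x : ZA) : x ∈ VV := by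
  have hgen : Set.range (fun g : ZGen => RingQuot.mkAlgHom ℂ ZRel (ZX g))
      ⊆ ↑VVsub := by
    rintro _ ⟨g, rfl⟩
    cases g with
    | e a => exact memE a
    | f a => exact memF a
    | g a => exact memG a
  have htop : (⊤ : Subalgebra ℂ ZA) ≤ VVsub := by
    have hr : (RingQuot.mkAlgHom ℂ ZRel).range = ⊤ :=
      (AlgHom.range_eq_top _).2 (RingQuot.mkAlgHom_surjective ℂ ZRel)
    calc (⊤ : Subalgebra ℂ ZA) = (RingQuot.mkAlgHom ℂ ZRel).range := hr.symm
      _ = (Algebra.adjoin ℂ (Set.range (FreeAlgebra.ι ℂ :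
            ZGen → FreeAlgebra ℂ ZGen))).map (RingQuot.mkAlgHom ℂ ZRel) := by
          rw [FreeAlgebra.adjoin_range_ι, ← Algebra.map_top]
      _ = Algebra.adjoin ℂ ((RingQuot.mkAlgHom ℂ ZRel) ''
            Set.range (FreeAlgebra.ι ℂ)) := AlgHom.map_adjoin _ _
      _ ≤ VVsub := by
          rw [← Set.range_comp]
          exact Algebra.adjoin_le hgen
  exact htop (Algebra.mem_top : x ∈ (⊤ : Subalgebra ℂ ZA))

lemma sandwich_mem (i j : ℕ) (w : ZA)
    (hw : ∀ s ∈ SGen, ZE j * s * ZE i ∈ Submodule.span ℂ {w}) (a : ZA) :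
    ZE j * a * ZE i ∈ Submodule.span ℂ {w} := by
  have ha : a ∈ VV := mem_VV a
  induction ha using Submodule.span_induction with
  | mem s hs => exact hw s hs
  | zero => rw [mul_zero, zero_mul]; exact zero_mem _
  | add x y _ _ hx hy => rw [mul_add, add_mul]; exact add_mem hx hy
  | smul c x _ hx => rw [mul_smul_comm, smul_mul_assoc]; exact smul_mem _ c hx

lemma Lcompute (i j : ℕ) (hij : i ≠ j) (w : ZA)
    (hF : tgtF i = j → ZF i ∈ Submodule.span ℂ {w})
    (hG : tgtF j = i → ZG j ∈ Submodule.span ℂ {w}) :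
    ∀ s ∈ SGen, ZE j * s * ZE i ∈ Submodule.span ℂ {w} := by
  rintro s ((((⟨a, rfl⟩ | ⟨a, rfl⟩) | ⟨a, rfl⟩) | ⟨a, rfl⟩) | rfl)
  · by_cases h : j = a
    · subst h; rw [ZE_idem, ZE_orth (Ne.symm hij)]; exact zero_mem _
    · rw [ZE_orth h, zero_mul]; exact zero_mem _
  · by_cases h : j = tgtF a
    · subst h
      by_cases h2 : a = i
      · subst h2; rw [ZF_tgt, ZF_src]; exact hF rfl
      · rw [ZF_tgt, Fe_ne h2]; exact zero_mem _
    · rw [eF_ne h, zero_mul]; exact zero_mem _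
  · by_cases h : j = a
    · subst h
      by_cases h2 : tgtF j = i
      · rw [ZG_tgt, ← h2, ZG_src]; exact hG h2
      · rw [ZG_tgt, Ge_ne h2]; exact zero_mem _
    · rw [eG_ne h, zero_mul]; exact zero_mem _
  · by_cases h : j = a
    · subst h; rw [ZEC_eq, ZCE_ne (Ne.symm hij)]; exact zero_mem _
    · rw [ZEC_ne h, zero_mul]; exact zero_mem _
  · rw [mul_one, ZE_orth (Ne.symm hij)]; exact zero_mem _

/-! ### Matrix models showing the arrows are nonzero -/

/-- Model sending `f i` to a matrix unit. -/
noncomputable def fFun (i : ℕ) : ZGen → Matrix (Fin 2) (Fin 2) ℂ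
  | .e k => if k = i then Matrix.single 0 0 1
      else if k = tgtF i then Matrix.single 1 1 1 else 0
  | .f k => if k = i then Matrix.single 1 0 1 else 0
  | .g _ => 0

/-- Model sending `g j` to a matrix unit. -/
noncomputable def gFun (j : ℕ) : ZGen → Matrix (Fin 2) (Fin 2) ℂ
  | .e k => if k = j then Matrix.single 0 0 1
      else if k = tgtF j then Matrix.single 1 1 1 else 0
  | .g k => if k = j then Matrix.single 0 1 1 else 0
  | .f _ => 0

lemma fFun_rel (i : ℕ) : ∀ ⦃x y⦄, ZRel x y →
    (FreeAlgebra.lift ℂ (fFun i)) x = (FreeAlgebra.lift ℂ (fFun i)) y := by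
  intro x y h
  cases h <;>
    simp only [ZX, _root_.map_mul, map_zero, FreeAlgebra.lift_ι_apply, fFun] <;>
    (try split_ifs) <;>
    (try simp_all [Matrix.single_mul_single_same, Matrix.single_mul_single_of_ne,
      tgtF_ne, (by decide : (0 : Fin 2) ≠ 1), (by decide : (1 : Fin 2) ≠ 0)])

lemma gFun_rel (j : ℕ) : ∀ ⦃x y⦄, ZRel x y →
    (FreeAlgebra.lift ℂ (gFun j)) x = (FreeAlgebra.lift ℂ (gFun j)) y := by
  intro x y h
  cases h <;>
    simp only [ZX, _root_.map_mul, map_zero, FreeAlgebra.lift_ι_apply, gFun] <;>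
    (try split_ifs) <;>
    (try simp_all [Matrix.single_mul_single_same, Matrix.single_mul_single_of_ne,
      tgtF_ne, (by decide : (0 : Fin 2) ≠ 1), (by decide : (1 : Fin 2) ≠ 0)])

noncomputable def phiF (i : ℕ) : ZA →ₐ[ℂ] Matrix (Fin 2) (Fin 2) ℂ :=
  RingQuot.liftAlgHom ℂ ⟨FreeAlgebra.lift ℂ (fFun i), fFun_rel i⟩

noncomputable def phiG (j : ℕ) : ZA →ₐ[ℂ] Matrix (Fin 2) (Fin 2) ℂ :=
  RingQuot.liftAlgHom ℂ ⟨FreeAlgebra.lift ℂ (gFun j), gFun_rel j⟩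

lemma stdBasisMatrix_ne_zero (a b : Fin 2) :
    (Matrix.single a b 1 : Matrix (Fin 2) (Fin 2) ℂ) ≠ 0 := by
  intro h
  have := congrFun (congrFun h a) b
  simp [Matrix.single] at this

lemma ZF_ne_zero (i : ℕ) : ZF i ≠ 0 := by
  intro h
  have h2 : phiF i (ZF i) = 0 := by rw [h, map_zero]
  rw [ZF, phiF, RingQuot.liftAlgHom_mkAlgHom_apply, ZX,
    FreeAlgebra.lift_ι_apply] at h2
  simp only [fFun, if_pos rfl] at h2
  exact stdBasisMatrix_ne_zero 1 0 h2

lemma ZG_ne_zero (j : ℕ) : ZG j ≠ 0 := by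
  intro h
  have h2 : phiG j (ZG j) = 0 := by rw [h, map_zero]
  rw [ZG, phiG, RingQuot.liftAlgHom_mkAlgHom_apply, ZX,
    FreeAlgebra.lift_ι_apply] at h2
  simp only [gFun, if_pos rfl] at h2
  exact stdBasisMatrix_ne_zero 0 1 h2

end Aux

/-- For distinct vertices `i ≠ j`, the space `e_j A e_i` is 1-dimensional if
`i` and `j` are adjacent in the quiver (connected by an arrow) and
0-dimensional otherwise. -/
theorem stmt_17 (i j : ℕ) (hij : i ≠ j) :
    Module.finrank ℂ
        (Submodule.span ℂ {x : ZA | ∃ a : ZA, x = ZE j * a * ZE i})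
      = if tgtF i = j ∨ tgtF j = i then 1 else 0 := by
  by_cases hA : tgtF i = j
  · rw [if_pos (Or.inl hA)]
    have hset : Submodule.span ℂ {x : ZA | ∃ a : ZA, x = ZE j * a * ZE i}
        = Submodule.span ℂ {ZF i} := by
      apply le_antisymm
      · rw [Submodule.span_le]
        rintro x ⟨a, rfl⟩
        exact sandwich_mem i j (ZF i)
          (Lcompute i j hij (ZF i)
            (fun _ => Submodule.mem_span_singleton_self _)
            (fun hB => absurd ⟨hA, hB⟩ (tgtF_excl i j))) a
      · rw [Submodule.span_le]
        rintro x rfl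
        have : ZE j * ZF i * ZE i = ZF i := by rw [← hA, ZF_tgt, ZF_src]
        exact Submodule.subset_span ⟨ZF i, this.symm⟩
    rw [hset]
    exact finrank_span_singleton (ZF_ne_zero i)
  · by_cases hB : tgtF j = i
    · rw [if_pos (Or.inr hB)]
      have hset : Submodule.span ℂ {x : ZA | ∃ a : ZA, x = ZE j * a * ZE i}
          = Submodule.span ℂ {ZG j} := by
        apply le_antisymm
        · rw [Submodule.span_le]
          rintro x ⟨a, rfl⟩
          exact sandwich_mem i j (ZG j)
            (Lcompute i j hij (ZG j)
              (fun hA' => absurd hA' hA)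
              (fun _ => Submodule.mem_span_singleton_self _)) a
        · rw [Submodule.span_le]
          rintro x rfl
          have : ZE j * ZG j * ZE i = ZG j := by rw [ZG_tgt, ← hB, ZG_src]
          exact Submodule.subset_span ⟨ZG j, this.symm⟩
      rw [hset]
      exact finrank_span_singleton (ZG_ne_zero j)
    · rw [if_neg (by tauto)]
      have hset : Submodule.span ℂ {x : ZA | ∃ a : ZA, x = ZE j * a * ZE i}
          = (⊥ : Submodule ℂ ZA) := by
        apply le_antisymm
        · rw [← Submodule.span_zero_singleton (R := ℂ) (M := ZA),
            Submodule.span_le]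
          rintro x ⟨a, rfl⟩
          exact sandwich_mem i j 0
            (Lcompute i j hij 0
              (fun hA' => absurd hA' hA)
              (fun hB' => absurd hB' hB)) a
        · exact bot_le
      rw [hset]
      exact finrank_bot ℂ ZA
end
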